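/- For any directed graph G on vertices {0,...,n} (multiple edges allowed, no loops), the set of G-parking functions has the same cardinality as the set of spanning trees of G rooted at 0. -/

import Mathlib

open Finset

open scoped Classical

/-- A subtree of the digraph (with multiplicity function `E`) on vertices
`{0,...,n}`, rooted at `0`: every non-root vertex of the subtree has a unique
outgoing edge (its parent together with the index of a parallel edge), and
iterating parents reaches the root. -/
structure Subtree (n : ℕ) (E : Fin (n+1) → Fin (n+1) → ℕ) where
  par : Fin (n+1) → Option (Fin (n+1) × ℕ)
  root_par : par 0 = none
  edge_valid : ∀ v p k, par v = some (p, k) → k < E v p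
  parent_mem : ∀ v p k, par v = some (p, k) → p = 0 ∨ (par p).isSome
  reaches : ∀ v, (par v).isSome →
    Relation.ReflTransGen (fun a c => ∃ k, par a = some (c, k)) v 0

noncomputable def Subtree.verts {n : ℕ} {E : Fin (n+1) → Fin (n+1) → ℕ}
    (t : Subtree n E) : Finset (Fin (n+1)) :=
  Finset.univ.filter (fun v => v = 0 ∨ (t.par v).isSome)

def Subtree.IsSubtreeOf {n : ℕ} {E : Fin (n+1) → Fin (n+1) → ℕ}
    (t T : Subtree n E) : Prop :=
  ∀ v, (t.par v).isSome → t.par v = T.par v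

def Subtree.IsSpanning {n : ℕ} {E : Fin (n+1) → Fin (n+1) → ℕ}
    (T : Subtree n E) : Prop :=
  ∀ v, v ∈ T.verts

/-- `b` is a `G`-parking function: for every non-empty set `U` of non-root
vertices there is `j ∈ U` with more than `b j` edges from `j` to the
complement of `U`. (The value `b 0` at the root is irrelevant.) -/
def IsParking {n : ℕ} (E : Fin (n+1) → Fin (n+1) → ℕ) (b : Fin (n+1) → ℕ) : Prop :=
  ∀ U : Finset (Fin (n+1)), U.Nonempty → 0 ∉ U → ∃ j ∈ U, b j < ∑ i ∈ Uᶜ, E j i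

variable {n : ℕ}

/-- One step of a burning process: insert the smallest eligible unburnt vertex. -/
noncomputable def grow (g : Fin (n+1) → Finset (Fin (n+1)) → Prop)
    (B : Finset (Fin (n+1))) : Finset (Fin (n+1)) :=
  if h : (univ.filter (fun j => j ∉ B ∧ g j B)).Nonempty then
    insert ((univ.filter (fun j => j ∉ B ∧ g j B)).min' h) B
  else B

noncomputable def burnt (g : Fin (n+1) → Finset (Fin (n+1)) → Prop) (t : ℕ) :
    Finset (Fin (n+1)) := (grow g)^[t] {0}

variable {g g' : Fin (n+1) → Finset (Fin (n+1)) → Prop}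

lemma subset_grow (B : Finset (Fin (n+1))) : B ⊆ grow g B := by
  unfold grow; split
  · exact subset_insert _ _
  · exact subset_rfl

lemma burnt_zero : burnt g 0 = {0} := rfl

lemma burnt_succ (t : ℕ) : burnt g (t+1) = grow g (burnt g t) :=
  Function.iterate_succ_apply' _ _ _

lemma burnt_mono {s t : ℕ} (h : s ≤ t) : burnt g s ⊆ burnt g t := by
  induction t with
  | zero => simpa [Nat.le_zero.mp h]
  | succ t ih =>
    rcases Nat.lt_or_ge s (t+1) with h' | h'
    · exact (ih (Nat.lt_succ_iff.mp h')).trans (by rw [burnt_succ]; exact subset_grow _)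
    · have : s = t+1 := le_antisymm h h'
      simp [this]

lemma zero_mem_burnt (t : ℕ) : (0 : Fin (n+1)) ∈ burnt g t :=
  burnt_mono (Nat.zero_le t) (by simp [burnt_zero])

lemma grow_eq_insert (B : Finset (Fin (n+1))) (h : ∃ j, j ∉ B ∧ g j B) :
    ∃ w, w ∉ B ∧ g w B ∧ (∀ j, j ∉ B → g j B → w ≤ j) ∧ grow g B = insert w B := by
  have hne : (univ.filter (fun j => j ∉ B ∧ g j B)).Nonempty := by
    obtain ⟨j, hj⟩ := h; exact ⟨j, by simp [hj.1, hj.2]⟩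
  refine ⟨(univ.filter (fun j => j ∉ B ∧ g j B)).min' hne, ?_, ?_, ?_, ?_⟩
  · have := Finset.min'_mem _ hne; simp only [mem_filter] at this; exact this.2.1
  · have := Finset.min'_mem _ hne; simp only [mem_filter] at this; exact this.2.2
  · intro j hj hgj; exact Finset.min'_le _ _ (by simp [hj, hgj])
  · unfold grow; rw [dif_pos hne]

lemma grow_stall (B : Finset (Fin (n+1))) (h : ¬ ∃ j, j ∉ B ∧ g j B) :
    grow g B = B := by
  unfold grow
  rw [dif_neg]
  intro ⟨j, hj⟩
  simp only [mem_filter] at hj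
  exact h ⟨j, hj.2⟩

lemma grow_congr (B : Finset (Fin (n+1))) (h : ∀ j, j ∉ B → (g j B ↔ g' j B)) :
    grow g B = grow g' B := by
  have : (univ.filter (fun j => j ∉ B ∧ g j B)) = (univ.filter (fun j => j ∉ B ∧ g' j B)) := by
    apply Finset.filter_congr
    intro j _
    constructor
    · rintro ⟨h1, h2⟩; exact ⟨h1, (h j h1).mp h2⟩
    · rintro ⟨h1, h2⟩; exact ⟨h1, (h j h1).mpr h2⟩
  unfold grow
  rw [this]

/-- A new element added at a step is the unique one, is eligible, and minimal. -/
lemma new_elt {t : ℕ} {v : Fin (n+1)} (hv : v ∈ burnt g (t+1)) (hv' : v ∉ burnt g t) :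
    g v (burnt g t) ∧ burnt g (t+1) = insert v (burnt g t) ∧
      (∀ j, j ∉ burnt g t → g j (burnt g t) → v ≤ j) := by
  rw [burnt_succ] at hv ⊢
  by_cases h : ∃ j, j ∉ burnt g t ∧ g j (burnt g t)
  · obtain ⟨w, hw1, hw2, hw3, hw4⟩ := grow_eq_insert _ h
    rw [hw4] at hv
    rcases Finset.mem_insert.mp hv with rfl | hv
    · exact ⟨hw2, hw4, hw3⟩
    · exact absurd hv hv'
  · rw [grow_stall _ h] at hv; exact absurd hv hv'

lemma burnt_univ (hc : ∀ t, burnt g t ≠ univ → ∃ j, j ∉ burnt g t ∧ g j (burnt g t)) :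
    burnt (n := n) g n = univ := by
  have key : ∀ t, burnt (n := n) g t = univ ∨ t + 1 ≤ (burnt g t).card := by
    intro t
    induction t with
    | zero => right; simp [burnt_zero]
    | succ t ih =>
      rcases ih with h | h
      · left
        rw [burnt_succ, h]
        apply Finset.eq_univ_of_forall
        intro x; exact subset_grow _ (by simp)
      · by_cases hu : burnt g t = univ
        · left
          rw [burnt_succ, hu]
          apply Finset.eq_univ_of_forall
          intro x; exact subset_grow _ (by simp)
        · right
          obtain ⟨w, hw1, hw2, hw3, hw4⟩ := grow_eq_insert _ (hc t hu)
          rw [burnt_succ, hw4, Finset.card_insert_of_notMem hw1]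
          omega
  rcases key n with h | h
  · exact h
  · apply Finset.eq_univ_of_card
    have := Finset.card_le_univ (burnt (n := n) g n)
    simp only [Finset.card_univ, Fintype.card_fin] at this ⊢
    omega

noncomputable def btime (g : Fin (n+1) → Finset (Fin (n+1)) → Prop) (v : Fin (n+1)) : ℕ :=
  sInf {t | v ∈ burnt g t}

lemma btime_le {v : Fin (n+1)} {t : ℕ} (h : v ∈ burnt g t) : btime g v ≤ t :=
  Nat.sInf_le h

lemma mem_burnt_btime {v : Fin (n+1)} (hv : ∃ t, v ∈ burnt g t) :
    v ∈ burnt g (btime g v) := Nat.sInf_mem hv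

lemma mem_burnt_iff {v : Fin (n+1)} (hv : ∃ t, v ∈ burnt g t) (t : ℕ) :
    v ∈ burnt g t ↔ btime g v ≤ t :=
  ⟨btime_le, fun h => burnt_mono h (mem_burnt_btime hv)⟩

lemma btime_zero : btime (n := n) g 0 = 0 :=
  Nat.le_zero.mp (btime_le (zero_mem_burnt 0))

lemma btime_pos {v : Fin (n+1)} (hv : ∃ t, v ∈ burnt g t) (h0 : v ≠ 0) :
    0 < btime g v := by
  rcases Nat.eq_zero_or_pos (btime g v) with h | h
  · have := mem_burnt_btime hv
    rw [h, burnt_zero, Finset.mem_singleton] at this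
    exact absurd this h0
  · exact h

lemma not_mem_burnt_pred {v : Fin (n+1)} (hv : ∃ t, v ∈ burnt g t) (h0 : v ≠ 0) :
    v ∉ burnt g (btime g v - 1) := by
  intro h
  have := btime_le h
  have := btime_pos hv h0
  omega

lemma burnt_btime_eq {v : Fin (n+1)} (hv : ∃ t, v ∈ burnt g t) (h0 : v ≠ 0) :
    burnt g (btime g v) = insert v (burnt g (btime g v - 1)) ∧
      g v (burnt g (btime g v - 1)) := by
  have hp := btime_pos hv h0
  have h1 : v ∈ burnt g (btime g v - 1 + 1) := by
    rw [Nat.sub_add_cancel hp]; exact mem_burnt_btime hv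
  obtain ⟨he, hi, _⟩ := new_elt h1 (not_mem_burnt_pred hv h0)
  rw [Nat.sub_add_cancel hp] at hi
  exact ⟨hi, he⟩

lemma erase_burnt_btime {v : Fin (n+1)} (hv : ∃ t, v ∈ burnt g t) (h0 : v ≠ 0) :
    (burnt g (btime g v)).erase v = burnt g (btime g v - 1) := by
  obtain ⟨hi, _⟩ := burnt_btime_eq hv h0
  rw [hi, Finset.erase_insert (not_mem_burnt_pred hv h0)]

noncomputable def addedAt (g : Fin (n+1) → Finset (Fin (n+1)) → Prop) (t : ℕ) : Fin (n+1) :=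
  if h : (burnt g (t+1) \ burnt g t).Nonempty then h.choose else 0

lemma addedAt_eq {t : ℕ} {w : Fin (n+1)} (h1 : w ∈ burnt g (t+1)) (h2 : w ∉ burnt g t) :
    addedAt g t = w := by
  have hne : (burnt g (t+1) \ burnt g t).Nonempty := ⟨w, Finset.mem_sdiff.mpr ⟨h1, h2⟩⟩
  have hch := hne.choose_spec
  rw [Finset.mem_sdiff] at hch
  obtain ⟨-, hins2, -⟩ := new_elt hch.1 hch.2
  unfold addedAt
  rw [dif_pos hne]
  rw [hins2, Finset.mem_insert] at h1
  rcases h1 with h | h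
  · exact h.symm
  · exact absurd h h2

lemma addedAt_btime {t : ℕ} {w : Fin (n+1)} (h1 : w ∈ burnt g (t+1)) (h2 : w ∉ burnt g t)
    (h3 : addedAt g t = w) : btime g w = t + 1 := by
  have hle := btime_le h1
  have : ¬ btime g w ≤ t := fun h => h2 (burnt_mono h (mem_burnt_btime ⟨t+1, h1⟩))
  omega

/-! ### The two eligibility predicates -/

variable {E : Fin (n+1) → Fin (n+1) → ℕ}

def gP (E : Fin (n+1) → Fin (n+1) → ℕ) (b : Fin (n+1) → ℕ) :
    Fin (n+1) → Finset (Fin (n+1)) → Prop :=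
  fun j B => b j < ∑ i ∈ B, E j i

def gT (T : Subtree n E) : Fin (n+1) → Finset (Fin (n+1)) → Prop :=
  fun j B => ∃ p k, T.par j = some (p, k) ∧ p ∈ B

lemma gP_complete {b : Fin (n+1) → ℕ} (hb : IsParking E b) (t : ℕ)
    (h : burnt (gP E b) t ≠ univ) :
    ∃ j, j ∉ burnt (gP E b) t ∧ gP E b j (burnt (gP E b) t) := by
  set B := burnt (gP E b) t with hB
  have hU : Bᶜ.Nonempty := by
    rw [← Finset.card_pos, Finset.card_compl, tsub_pos_iff_lt]
    exact lt_of_le_of_ne (Finset.card_le_univ B) (fun hc => h (Finset.eq_univ_of_card _ (by simpa using hc)))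
  have h0 : (0 : Fin (n+1)) ∉ Bᶜ := by
    simp only [Finset.mem_compl, not_not]
    exact zero_mem_burnt t
  obtain ⟨j, hjU, hj⟩ := hb Bᶜ hU h0
  refine ⟨j, Finset.mem_compl.mp hjU, ?_⟩
  rwa [compl_compl] at hj

lemma gT_complete {T : Subtree n E} (hT : T.IsSpanning) (t : ℕ)
    (h : burnt (gT T) t ≠ univ) :
    ∃ j, j ∉ burnt (gT T) t ∧ gT T j (burnt (gT T) t) := by
  set B := burnt (gT T) t with hB
  have : ∃ v, v ∉ B := by
    by_contra hc
    push_neg at hc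
    exact h (Finset.eq_univ_of_forall hc)
  obtain ⟨v, hv⟩ := this
  have hv0 : v ≠ 0 := fun hv0 => hv (hv0 ▸ zero_mem_burnt t)
  have hsome : (T.par v).isSome := by
    have := hT v
    simp only [Subtree.verts, Finset.mem_filter] at this
    exact this.2.resolve_left hv0
  have hreach := T.reaches v hsome
  clear hsome hv0
  revert hv
  induction hreach using Relation.ReflTransGen.head_induction_on with
  | refl => exact fun hv => absurd (zero_mem_burnt t) hv
  | head hac hcb ih =>
    rename_i a c
    intro hv
    obtain ⟨k, hk⟩ := hac
    by_cases hc : c ∈ B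
    · exact ⟨a, hv, c, k, hk, hc⟩
    · exact ih hc

/-! ### Forward map: parking function → spanning tree -/

/-- First time `v` becomes eligible in the parking burning process. -/
noncomputable def tauB (E : Fin (n+1) → Fin (n+1) → ℕ) (b : Fin (n+1) → ℕ)
    (v : Fin (n+1)) : ℕ :=
  sInf {t | b v < ∑ i ∈ burnt (gP E b) t, E v i}

lemma sumS_mono {b : Fin (n+1) → ℕ} (v : Fin (n+1)) {s t : ℕ} (h : s ≤ t) :
    ∑ i ∈ burnt (gP E b) s, E v i ≤ ∑ i ∈ burnt (gP E b) t, E v i :=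
  Finset.sum_le_sum_of_subset (burnt_mono h)

lemma tauB_spec {b : Fin (n+1) → ℕ} {v : Fin (n+1)}
    (hv : ∃ t, b v < ∑ i ∈ burnt (gP E b) t, E v i) :
    b v < ∑ i ∈ burnt (gP E b) (tauB E b v), E v i :=
  Nat.sInf_mem hv

lemma tauB_le {b : Fin (n+1) → ℕ} {v : Fin (n+1)} {t : ℕ}
    (h : b v < ∑ i ∈ burnt (gP E b) t, E v i) : tauB E b v ≤ t :=
  Nat.sInf_le h

lemma lt_sum_iff_tauB {b : Fin (n+1) → ℕ} {v : Fin (n+1)}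
    (hv : ∃ t, b v < ∑ i ∈ burnt (gP E b) t, E v i) (t : ℕ) :
    b v < ∑ i ∈ burnt (gP E b) t, E v i ↔ tauB E b v ≤ t :=
  ⟨tauB_le, fun h => lt_of_lt_of_le (tauB_spec hv) (sumS_mono v h)⟩

/-- Parent assignment of the forward map. -/
noncomputable def parB (E : Fin (n+1) → Fin (n+1) → ℕ) (b : Fin (n+1) → ℕ)
    (v : Fin (n+1)) : Option (Fin (n+1) × ℕ) :=
  if v = 0 then none
  else if tauB E b v = 0 then some (0, b v)
  else some (addedAt (gP E b) (tauB E b v - 1),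
    b v - ∑ i ∈ burnt (gP E b) (tauB E b v - 1), E v i)

section Forward

variable {b : Fin (n+1) → ℕ} (hb : IsParking E b)
include hb

lemma fwd_all_burnt : ∀ v : Fin (n+1), ∃ t, v ∈ burnt (gP E b) t :=
  fun v => ⟨n, by rw [burnt_univ (fun t h => gP_complete hb t h)]; exact Finset.mem_univ v⟩

lemma fwd_tau_nonempty {v : Fin (n+1)} (h0 : v ≠ 0) :
    ∃ t, b v < ∑ i ∈ burnt (gP E b) t, E v i := by
  obtain ⟨_, he⟩ := burnt_btime_eq (fwd_all_burnt hb v) h0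
  exact ⟨btime (gP E b) v - 1, he⟩

lemma fwd_tau_lt_btime {v : Fin (n+1)} (h0 : v ≠ 0) :
    tauB E b v < btime (gP E b) v := by
  obtain ⟨_, he⟩ := burnt_btime_eq (fwd_all_burnt hb v) h0
  have h1 := tauB_le (E := E) he
  have h2 := btime_pos (fwd_all_burnt hb v) h0
  omega

lemma fwd_parent_spec {v : Fin (n+1)} (h0 : v ≠ 0) :
    ∃ p k, parB E b v = some (p, k) ∧ k < E v p ∧
      btime (gP E b) p = tauB E b v := by
  set τ := tauB E b v with hτ
  rcases Nat.eq_zero_or_pos τ with h | h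
  · refine ⟨0, b v, by rw [parB, if_neg h0, if_pos h], ?_, by rw [btime_zero, h]⟩
    have := tauB_spec (fwd_tau_nonempty hb h0)
    rw [← hτ, h, burnt_zero, Finset.sum_singleton] at this
    exact this
  · have hne : τ - 1 + 1 = τ := Nat.succ_pred_eq_of_pos h
    have hlt : b v < ∑ i ∈ burnt (gP E b) (τ - 1 + 1), E v i := by
      rw [hne]; exact tauB_spec (fwd_tau_nonempty hb h0)
    have hge : ¬ b v < ∑ i ∈ burnt (gP E b) (τ - 1), E v i := by
      intro hc
      have := tauB_le (E := E) hc
      omega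
    -- the burnt set strictly grows at step τ
    have hnew : ∃ w, w ∈ burnt (gP E b) (τ - 1 + 1) ∧ w ∉ burnt (gP E b) (τ - 1) := by
      by_contra hc
      push_neg at hc
      have : ∑ i ∈ burnt (gP E b) (τ - 1 + 1), E v i ≤ ∑ i ∈ burnt (gP E b) (τ - 1), E v i :=
        Finset.sum_le_sum_of_subset (fun x hx => by
          by_contra hxx; exact hxx (hc x hx))
      omega
    obtain ⟨w, hw1, hw2⟩ := hnew
    have hadd : addedAt (gP E b) (τ - 1) = w := addedAt_eq hw1 hw2
    have hbt : btime (gP E b) w = τ - 1 + 1 := addedAt_btime hw1 hw2 hadd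
    refine ⟨w, b v - ∑ i ∈ burnt (gP E b) (τ - 1), E v i, ?_, ?_, by rw [hbt, hne]⟩
    · rw [parB, if_neg h0, if_neg (by omega), hadd]
    · obtain ⟨-, hins, -⟩ := new_elt hw1 hw2
      rw [hins, Finset.sum_insert hw2] at hlt
      omega

/-- The forward tree. -/
noncomputable def fwdTree : Subtree n E where
  par := parB E b
  root_par := by rw [parB, if_pos rfl]
  edge_valid := by
    intro v p k hpk
    have h0 : v ≠ 0 := by
      intro h; rw [h, parB, if_pos rfl] at hpk; exact nomatch hpk
    obtain ⟨p', k', hpk', hk', -⟩ := fwd_parent_spec hb h0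
    rw [hpk] at hpk'
    obtain ⟨rfl, rfl⟩ := Prod.mk.injEq .. ▸ Option.some.injEq .. ▸ hpk'
    exact hk'
  parent_mem := by
    intro v p k hpk
    by_cases hp : p = 0
    · exact Or.inl hp
    · right
      rw [parB, if_neg hp]
      split <;> simp
  reaches := by
    have key : ∀ m, ∀ v : Fin (n+1), btime (gP E b) v ≤ m →
        Relation.ReflTransGen (fun a c => ∃ k, parB E b a = some (c, k)) v 0 := by
      intro m
      induction m with
      | zero =>
        intro v hv
        have : v ∈ burnt (gP E b) 0 := by
          rw [← Nat.le_zero.mp hv]; exact mem_burnt_btime (fwd_all_burnt hb v)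
        rw [burnt_zero, Finset.mem_singleton] at this
        rw [this]
      | succ m ih =>
        intro v hv
        by_cases h0 : v = 0
        · rw [h0]
        · obtain ⟨p, k, hpk, -, hbt⟩ := fwd_parent_spec hb h0
          have h1 : tauB E b v < btime (gP E b) v := fwd_tau_lt_btime hb h0
          have h2 : btime (gP E b) p ≤ m := by omega
          exact Relation.ReflTransGen.head ⟨k, hpk⟩ (ih p h2)
    intro v _
    exact key (btime (gP E b) v) v le_rfl

lemma fwdTree_spanning : (fwdTree hb).IsSpanning := by
  intro v
  simp only [Subtree.verts, Finset.mem_filter, Finset.mem_univ, true_and]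
  by_cases h0 : v = 0
  · exact Or.inl h0
  · right
    show (parB E b v).isSome
    rw [parB, if_neg h0]
    split <;> simp

end Forward

/-! ### Backward map: spanning tree → parking function -/

noncomputable def bwd (T : Subtree n E) : Fin (n+1) → ℕ := fun v =>
  match T.par v with
  | none => 0
  | some (p, k) => (∑ i ∈ (burnt (gT T) (btime (gT T) p)).erase p, E v i) + k

lemma bwd_zero (T : Subtree n E) : bwd T 0 = 0 := by
  unfold bwd
  rw [T.root_par]

lemma bwd_eq {T : Subtree n E} {v p : Fin (n+1)} {k : ℕ} (h : T.par v = some (p, k)) :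
    bwd T v = (∑ i ∈ (burnt (gT T) (btime (gT T) p)).erase p, E v i) + k := by
  unfold bwd
  rw [h]

section Backward

variable {T : Subtree n E} (hT : T.IsSpanning)
include hT

lemma bwd_all_burnt : ∀ v : Fin (n+1), ∃ t, v ∈ burnt (gT T) t :=
  fun v => ⟨n, by rw [burnt_univ (fun t h => gT_complete hT t h)]; exact Finset.mem_univ v⟩

/-- Key: eligibility for the parking process of `bwd T` matches parent-burnt. -/
lemma bwd_key {v p : Fin (n+1)} {k : ℕ} (h : T.par v = some (p, k)) (t : ℕ) :
    bwd T v < ∑ i ∈ burnt (gT T) t, E v i ↔ p ∈ burnt (gT T) t := by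
  have hk : k < E v p := T.edge_valid v p k h
  rw [bwd_eq h]
  constructor
  · intro hlt
    by_contra hp
    have hp0 : p ≠ 0 := fun hp0 => hp (hp0 ▸ zero_mem_burnt t)
    have ht : t < btime (gT T) p := by
      by_contra hc
      push_neg at hc
      exact hp (burnt_mono hc (mem_burnt_btime (bwd_all_burnt hT p)))
    have hsub : burnt (gT T) t ⊆ (burnt (gT T) (btime (gT T) p)).erase p := by
      rw [erase_burnt_btime (bwd_all_burnt hT p) hp0]
      exact burnt_mono (by omega)
    have : ∑ i ∈ burnt (gT T) t, E v i ≤ ∑ i ∈ (burnt (gT T) (btime (gT T) p)).erase p, E v i :=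
      Finset.sum_le_sum_of_subset hsub
    omega
  · intro hp
    have hsub : burnt (gT T) (btime (gT T) p) ⊆ burnt (gT T) t :=
      burnt_mono (btime_le hp)
    have hmem : p ∈ burnt (gT T) (btime (gT T) p) := mem_burnt_btime (bwd_all_burnt hT p)
    have hsum : ∑ i ∈ (burnt (gT T) (btime (gT T) p)).erase p, E v i + E v p
        = ∑ i ∈ burnt (gT T) (btime (gT T) p), E v i := by
      rw [add_comm]
      exact Finset.add_sum_erase _ _ hmem
    have : ∑ i ∈ burnt (gT T) (btime (gT T) p), E v i ≤ ∑ i ∈ burnt (gT T) t, E v i :=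
      Finset.sum_le_sum_of_subset hsub
    omega

lemma bwd_parking : IsParking E (bwd T) := by
  intro U hU hU0
  obtain ⟨j, hjU, hjmin⟩ := Finset.exists_min_image U (btime (gT T)) hU
  have hj0 : j ≠ 0 := fun h => hU0 (h ▸ hjU)
  have hsome : (T.par j).isSome := by
    have := hT j
    simp only [Subtree.verts, Finset.mem_filter] at this
    exact this.2.resolve_left hj0
  obtain ⟨⟨p, k⟩, hpk⟩ := Option.isSome_iff_exists.mp hsome
  refine ⟨j, hjU, ?_⟩
  -- p is burnt strictly before j
  have hpb : p ∈ burnt (gT T) (btime (gT T) j - 1) := by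
    obtain ⟨-, he⟩ := burnt_btime_eq (bwd_all_burnt hT j) hj0
    obtain ⟨p', k', hpk', hp'⟩ := he
    rw [hpk] at hpk'
    obtain ⟨rfl, rfl⟩ := Prod.mk.injEq .. ▸ Option.some.injEq .. ▸ hpk'
    exact hp'
  have hjpos := btime_pos (bwd_all_burnt hT j) hj0
  have hplt : btime (gT T) p < btime (gT T) j := by
    have := btime_le hpb
    omega
  have hsub : burnt (gT T) (btime (gT T) p) ⊆ Uᶜ := by
    intro i hi
    rw [Finset.mem_compl]
    intro hiU
    have h1 : btime (gT T) i ≤ btime (gT T) p := btime_le hi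
    have h2 := hjmin i hiU
    omega
  have : ∑ i ∈ burnt (gT T) (btime (gT T) p), E j i ≤ ∑ i ∈ Uᶜ, E j i :=
    Finset.sum_le_sum_of_subset hsub
  have hkey := (bwd_key hT hpk (btime (gT T) p)).mpr (mem_burnt_btime (bwd_all_burnt hT p))
  omega

end Backward

/-! ### Round trip 1: tree → parking → tree -/

lemma span_par {T : Subtree n E} (hT : T.IsSpanning) {j : Fin (n+1)} (hj : j ≠ 0) :
    ∃ p k, T.par j = some (p, k) := by
  have := hT j
  simp only [Subtree.verts, Finset.mem_filter] at this
  obtain ⟨⟨p, k⟩, hpk⟩ := Option.isSome_iff_exists.mp (this.2.resolve_left hj)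
  exact ⟨p, k, hpk⟩

section RT1

variable {T : Subtree n E} (hT : T.IsSpanning)
include hT

lemma rt1_burnt (t : ℕ) : burnt (gP E (bwd T)) t = burnt (gT T) t := by
  induction t with
  | zero => rfl
  | succ t ih =>
    rw [burnt_succ, burnt_succ, ih]
    apply grow_congr
    intro j hj
    have hj0 : j ≠ 0 := fun h => hj (h ▸ zero_mem_burnt t)
    obtain ⟨p, k, hpk⟩ := span_par hT hj0
    rw [show (gP E (bwd T) j (burnt (gT T) t)) = (bwd T j < ∑ i ∈ burnt (gT T) t, E j i) from rfl,
      bwd_key hT hpk t]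
    constructor
    · intro hp
      exact ⟨p, k, hpk, hp⟩
    · rintro ⟨p', k', hpk', hp'⟩
      rw [hpk] at hpk'
      obtain ⟨rfl, rfl⟩ := Prod.mk.injEq .. ▸ Option.some.injEq .. ▸ hpk'.symm
      exact hp'

lemma rt1_tau {v p : Fin (n+1)} {k : ℕ} (hv : v ≠ 0) (hpk : T.par v = some (p, k)) :
    tauB E (bwd T) v = btime (gT T) p := by
  have hpmem : p ∈ burnt (gT T) (btime (gT T) p) := mem_burnt_btime (bwd_all_burnt hT p)
  have hnon : ∃ t, bwd T v < ∑ i ∈ burnt (gP E (bwd T)) t, E v i :=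
    ⟨btime (gT T) p, by rw [rt1_burnt hT]; exact (bwd_key hT hpk _).mpr hpmem⟩
  apply le_antisymm
  · apply tauB_le
    rw [rt1_burnt hT]
    exact (bwd_key hT hpk _).mpr hpmem
  · have h2 := tauB_spec hnon
    rw [rt1_burnt hT] at h2
    exact btime_le ((bwd_key hT hpk _).mp h2)

lemma rt1_par : parB E (bwd T) = T.par := by
  funext v
  by_cases h0 : v = 0
  · rw [h0, parB, if_pos rfl, T.root_par]
  · obtain ⟨p, k, hpk⟩ := span_par hT h0
    have htau := rt1_tau hT h0 hpk
    rcases Nat.eq_zero_or_pos (btime (gT T) p) with hz | hp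
    · have hpz : p = 0 := by
        have := mem_burnt_btime (bwd_all_burnt hT p)
        rw [hz, burnt_zero, Finset.mem_singleton] at this
        exact this
      have hbv : bwd T v = k := by
        rw [bwd_eq hpk, hpz, btime_zero, burnt_zero]
        simp
      rw [parB, if_neg h0, if_pos (htau.trans hz), hpk, hbv, hpz]
    · have hp0 : p ≠ 0 := fun h => by rw [h, btime_zero] at hp; omega
      have hne : btime (gT T) p - 1 + 1 = btime (gT T) p := Nat.succ_pred_eq_of_pos hp
      have hmem1 : p ∈ burnt (gP E (bwd T)) (btime (gT T) p - 1 + 1) := by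
        rw [rt1_burnt hT, hne]
        exact mem_burnt_btime (bwd_all_burnt hT p)
      have hmem2 : p ∉ burnt (gP E (bwd T)) (btime (gT T) p - 1) := by
        rw [rt1_burnt hT]
        exact not_mem_burnt_pred (bwd_all_burnt hT p) hp0
      have hadd : addedAt (gP E (bwd T)) (btime (gT T) p - 1) = p := addedAt_eq hmem1 hmem2
      have hksum : bwd T v - ∑ i ∈ burnt (gP E (bwd T)) (btime (gT T) p - 1), E v i = k := by
        rw [rt1_burnt hT, bwd_eq hpk,
          ← erase_burnt_btime (bwd_all_burnt hT p) hp0]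
        omega
      rw [parB, if_neg h0, if_neg (by omega : ¬ tauB E (bwd T) v = 0), htau, hadd, hksum, hpk]

end RT1

/-! ### Round trip 2: parking → tree → parking -/

section RT2

variable {b : Fin (n+1) → ℕ} (hb : IsParking E b)
include hb

lemma rt2_burnt (t : ℕ) : burnt (gT (fwdTree hb)) t = burnt (gP E b) t := by
  induction t with
  | zero => rfl
  | succ t ih =>
    rw [burnt_succ, burnt_succ, ih]
    apply grow_congr
    intro j hj
    have hj0 : j ≠ 0 := fun h => hj (h ▸ zero_mem_burnt t)
    obtain ⟨p, k, hpk, -, hbt⟩ := fwd_parent_spec hb hj0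
    have hiff1 : gP E b j (burnt (gP E b) t) ↔ tauB E b j ≤ t :=
      lt_sum_iff_tauB (fwd_tau_nonempty hb hj0) t
    have hiff2 : p ∈ burnt (gP E b) t ↔ tauB E b j ≤ t := by
      rw [mem_burnt_iff (fwd_all_burnt hb p), hbt]
    constructor
    · rintro ⟨p', k', hpk', hp'⟩
      have : parB E b j = some (p', k') := hpk'
      rw [hpk] at this
      obtain ⟨rfl, rfl⟩ := Prod.mk.injEq .. ▸ Option.some.injEq .. ▸ this.symm
      exact hiff1.mpr (hiff2.mp hp')
    · intro hgp
      exact ⟨p, k, hpk, hiff2.mpr (hiff1.mp hgp)⟩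

lemma rt2_btime (p : Fin (n+1)) : btime (gT (fwdTree hb)) p = btime (gP E b) p := by
  unfold btime
  congr 1
  ext t
  rw [Set.mem_setOf_eq, Set.mem_setOf_eq, rt2_burnt hb t]

lemma rt2_b (hb0 : b 0 = 0) : bwd (fwdTree hb) = b := by
  funext v
  by_cases h0 : v = 0
  · rw [h0, bwd_zero, hb0]
  · obtain ⟨p, k, hpk, -, hbt⟩ := fwd_parent_spec hb h0
    have hpar : (fwdTree hb).par v = some (p, k) := hpk
    rw [bwd_eq hpar, rt2_btime hb p, hbt]
    rcases Nat.eq_zero_or_pos (tauB E b v) with hz | hpos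
    · have hpk2 : parB E b v = some (0, b v) := by rw [parB, if_neg h0, if_pos hz]
      rw [hpk] at hpk2
      obtain ⟨rfl, rfl⟩ := Prod.mk.injEq .. ▸ Option.some.injEq .. ▸ hpk2.symm
      rw [hz, rt2_burnt hb 0, burnt_zero]
      simp
    · have hpk2 : parB E b v = some (addedAt (gP E b) (tauB E b v - 1),
          b v - ∑ i ∈ burnt (gP E b) (tauB E b v - 1), E v i) := by
        rw [parB, if_neg h0, if_neg (by omega)]
      have hpe := hpk.symm.trans hpk2
      injection hpe with hpe
      injection hpe with hpe hke
      rw [hpe, hke]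
      rw [hpe] at hbt
      clear hpk hpar hpk2 hke hpe
      set p := addedAt (gP E b) (tauB E b v - 1) with hpdef
      have hp0 : p ≠ 0 := by
        intro h
        rw [h, btime_zero] at hbt
        omega
      have hall : ∃ t, p ∈ burnt (gT (fwdTree hb)) t := by
        obtain ⟨t, ht⟩ := fwd_all_burnt hb p
        exact ⟨t, by rw [rt2_burnt hb t]; exact ht⟩
      have herase : (burnt (gT (fwdTree hb)) (tauB E b v)).erase p
          = burnt (gP E b) (tauB E b v - 1) := by
        have h1 := erase_burnt_btime hall hp0
        rw [rt2_btime hb p, hbt] at h1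
        rw [h1, rt2_burnt hb _]
      rw [herase]
      have hle : ¬ b v < ∑ i ∈ burnt (gP E b) (tauB E b v - 1), E v i := by
        intro hc
        have := tauB_le (E := E) hc
        omega
      omega

end RT2

lemma Subtree.ext' {t1 t2 : Subtree n E} (h : t1.par = t2.par) : t1 = t2 := by
  cases t1; cases t2
  simp only at h
  subst h
  rfl

/-- The number of `G`-parking functions equals the number of spanning trees of
`G` rooted at `0`. -/
theorem stmt_4 (n : ℕ) (E : Fin (n+1) → Fin (n+1) → ℕ) :
    Nat.card {b : Fin (n+1) → ℕ // IsParking E b ∧ b 0 = 0} =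
      Nat.card {T : Subtree n E // T.IsSpanning} := by
  apply Nat.card_congr
  refine ⟨fun x => ⟨fwdTree x.2.1, fwdTree_spanning x.2.1⟩,
    fun y => ⟨bwd y.1, bwd_parking y.2, bwd_zero y.1⟩, ?_, ?_⟩
  · rintro ⟨b, hb, hb0⟩
    exact Subtype.ext (rt2_b hb hb0)
  · rintro ⟨T, hT⟩
    exact Subtype.ext (Subtree.ext' (rt1_par hT))
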